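/- Every nonzero codeword in the 𝔽₂-span of the rows of the 12×24 matrix G from the paper has Hamming weight at least 8, and the weights are all divisible by 4. -/

import Mathlib

def G : Matrix (Fin 12) (Fin 24) (ZMod 2) :=
  !![1, 0, 1, 0, 0, 0, 0, 1, 0, 0, 1, 0, 0, 1, 1, 0, 0, 0, 1, 0, 0, 0, 0, 1;
    0, 1, 0, 1, 0, 1, 0, 0, 0, 1, 0, 0, 1, 0, 0, 0, 0, 1, 0, 0, 0, 1, 1, 0;
    0, 0, 1, 0, 0, 0, 1, 0, 1, 0, 1, 0, 1, 0, 0, 1, 1, 0, 0, 0, 0, 0, 1, 0;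
    0, 0, 0, 1, 1, 1, 0, 0, 0, 0, 0, 1, 0, 1, 0, 0, 0, 0, 0, 1, 1, 0, 0, 1;
    0, 1, 0, 0, 1, 0, 0, 0, 0, 1, 0, 1, 0, 0, 1, 1, 1, 0, 1, 0, 0, 0, 0, 0;
    1, 0, 1, 0, 0, 0, 1, 1, 1, 0, 1, 0, 0, 1, 0, 1, 1, 1, 0, 0, 0, 1, 0, 1;
    0, 0, 1, 0, 1, 1, 0, 0, 1, 0, 0, 0, 1, 1, 0, 1, 0, 0, 0, 1, 0, 0, 0, 0;
    1, 1, 1, 0, 0, 1, 0, 0, 0, 0, 0, 0, 0, 0, 1, 0, 0, 1, 0, 0, 0, 0, 1, 1;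
    0, 0, 0, 0, 0, 0, 1, 1, 0, 1, 0, 1, 0, 0, 1, 1, 0, 1, 0, 1, 0, 0, 0, 0;
    1, 1, 0, 0, 1, 0, 0, 0, 1, 0, 0, 0, 0, 0, 0, 0, 1, 0, 1, 0, 1, 1, 0, 0;
    0, 0, 0, 1, 0, 0, 0, 1, 0, 1, 1, 0, 1, 1, 0, 0, 0, 0, 1, 0, 0, 1, 0, 0;
    0, 1, 0, 1, 1, 1, 0, 0, 0, 1, 0, 1, 1, 0, 1, 0, 0, 0, 1, 1, 1, 0, 1, 0]

def rows : Fin 12 → ℕ := ![8676485, 6427178, 4298052, 9971768, 379410, 10724805, 569652, 12730407, 707264, 3473683, 2373256, 6052410]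

def dec (n : ℕ) : Fin 24 → ZMod 2 := fun j => if n.testBit (j : ℕ) then 1 else 0

def wt (n : ℕ) : ℕ := (Finset.univ.filter fun j : Fin 24 => n.testBit (j : ℕ)).card

lemma hammingNorm_dec (n : ℕ) : hammingNorm (dec n) = wt n := by
  unfold hammingNorm wt
  congr 1
  ext j
  simp only [Finset.mem_filter, dec]
  cases h : n.testBit (j : ℕ) <;> simp [h]

lemma dec_zero : dec 0 = 0 := by
  funext j; simp [dec]

lemma dec_xor (a b : ℕ) : dec a + dec b = dec (a ^^^ b) := by
  funext j
  simp only [Pi.add_apply, dec, Nat.testBit_xor]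
  cases ha : a.testBit (j : ℕ) <;> cases hb : b.testBit (j : ℕ) <;> simp <;> decide

lemma wt_eq_zero_imp (n : ℕ) (h : wt n = 0) : dec n = 0 := by
  funext j
  by_cases hj : n.testBit (j : ℕ)
  · exfalso
    unfold wt at h
    have hmem : j ∈ Finset.univ.filter fun j : Fin 24 => n.testBit (j : ℕ) := by simp [hj]
    rw [Finset.card_eq_zero.mp h] at hmem
    exact absurd hmem (Finset.notMem_empty j)
  · simp [dec, hj]

lemma G_eq : ∀ i, G i = dec (rows i) := by
  intro i
  funext j
  fin_cases i <;> fin_cases j <;> rfl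

def N (a0 a1 a2 a3 a4 a5 a6 a7 a8 a9 a10 a11 : Bool) : ℕ := (cond a0 (rows 0) 0) ^^^ ((cond a1 (rows 1) 0) ^^^ ((cond a2 (rows 2) 0) ^^^ ((cond a3 (rows 3) 0) ^^^ ((cond a4 (rows 4) 0) ^^^ ((cond a5 (rows 5) 0) ^^^ ((cond a6 (rows 6) 0) ^^^ ((cond a7 (rows 7) 0) ^^^ ((cond a8 (rows 8) 0) ^^^ ((cond a9 (rows 9) 0) ^^^ ((cond a10 (rows 10) 0) ^^^ ((cond a11 (rows 11) 0))))))))))))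

set_option maxHeartbeats 4000000 in
set_option maxRecDepth 20000 in
lemma check : ∀ a0 a1 a2 a3 a4 a5 a6 a7 a8 a9 a10 a11 : Bool,
    wt (N a0 a1 a2 a3 a4 a5 a6 a7 a8 a9 a10 a11) = 0 ∨ (8 ≤ wt (N a0 a1 a2 a3 a4 a5 a6 a7 a8 a9 a10 a11) ∧ 4 ∣ wt (N a0 a1 a2 a3 a4 a5 a6 a7 a8 a9 a10 a11)) := by
  decide

lemma smul_G (x : ZMod 2) (i : Fin 12) :
    x • G i = dec (cond (decide (x = 1)) (rows i) 0) := by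
  fin_cases x
  · show (0 : ZMod 2) • G i = dec (cond (decide ((0 : ZMod 2) = 1)) (rows i) 0)
    simp [dec_zero]
  · show (1 : ZMod 2) • G i = dec (cond (decide ((1 : ZMod 2) = 1)) (rows i) 0)
    simp [G_eq]

theorem code_min_weight_eight_doubly_even :
    ∀ v ∈ Submodule.span (ZMod 2) (Set.range fun i : Fin 12 => G i),
      v ≠ 0 → 8 ≤ hammingNorm v ∧ 4 ∣ hammingNorm v := by
  intro v hv hne
  rw [Submodule.mem_span_range_iff_exists_fun] at hv
  obtain ⟨c, rfl⟩ := hv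
  have hmask : (∑ i, c i • G i) =
      dec (N (decide (c 0 = 1)) (decide (c 1 = 1)) (decide (c 2 = 1)) (decide (c 3 = 1)) (decide (c 4 = 1)) (decide (c 5 = 1)) (decide (c 6 = 1)) (decide (c 7 = 1)) (decide (c 8 = 1)) (decide (c 9 = 1)) (decide (c 10 = 1)) (decide (c 11 = 1))) := by
    simp only [smul_G, Fin.sum_univ_succ, Fin.sum_univ_zero, add_zero, dec_xor, N]
    rfl
  rw [hmask] at hne ⊢
  rw [hammingNorm_dec]
  rcases check (decide (c 0 = 1)) (decide (c 1 = 1)) (decide (c 2 = 1)) (decide (c 3 = 1)) (decide (c 4 = 1)) (decide (c 5 = 1)) (decide (c 6 = 1)) (decide (c 7 = 1)) (decide (c 8 = 1)) (decide (c 9 = 1)) (decide (c 10 = 1)) (decide (c 11 = 1)) with h0 | h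
  · exact absurd (wt_eq_zero_imp _ h0) hne
  · exact h
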